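/- Let d ≥ 1 and let φ : ℝ^d × ℝ^d → ℝ be continuous, compactly supported in its first variable, and ℤ^d-periodic in its second variable. Then lim_{ε→0⁺} sup_{s∈ℝ^d} | ∫_{ℝ^d} φ(x, x/ε + s) dx − ∫_{ℝ^d} ∫_{[0,1]^d} φ(x,y) dy dx | = 0; the convergence of the oscillating integrals is uniform with respect to arbitrary shifts s of the fast variable. -/

import Mathlib

open MeasureTheory Pointwise

namespace OscAux

variable (d : ℕ)

noncomputable abbrev bb : Module.Basis (Fin d) ℝ (Fin d → ℝ) := Pi.basisFun ℝ (Fin d)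

abbrev LL : Submodule ℤ (Fin d → ℝ) := Submodule.span ℤ (Set.range ⇑(bb d))

instance : MeasurableVAdd (LL d) (Fin d → ℝ) :=
  { measurable_const_vadd := fun γ => measurable_const_add (γ : Fin d → ℝ),
    measurable_vadd_const := fun x => measurable_subtype_coe.add_const x }

instance : VAddInvariantMeasure (LL d) (Fin d → ℝ) volume :=
  ⟨fun γ s _ => measure_preimage_add volume (γ : Fin d → ℝ) s⟩

instance : VAddCommClass (Fin d → ℝ) (LL d) (Fin d → ℝ) :=
  ⟨fun a γ x => by show a + ((γ : Fin d → ℝ) + x) = (γ : Fin d → ℝ) + (a + x); ring⟩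

lemma intvec {γ : Fin d → ℝ} (hγ : γ ∈ LL d) : ∃ k : Fin d → ℤ, γ = fun i => (k i : ℝ) := by
  rw [Module.Basis.mem_span_iff_repr_mem] at hγ
  choose k hk using hγ
  refine ⟨k, funext fun i => ?_⟩
  have := hk i
  rw [Pi.basisFun_repr] at this
  exact this.symm

instance : Countable (LL d) := by
  have : ((LL d : Set (Fin d → ℝ))) ⊆
      Set.range (fun k : Fin d → ℤ => (fun i => (k i : ℝ) : Fin d → ℝ)) := by
    intro γ hγ
    obtain ⟨k, hk⟩ := intvec d (SetLike.mem_coe.mp hγ)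
    exact ⟨k, hk.symm⟩
  exact (Set.countable_range _ |>.mono this).to_subtype

lemma D_subset : ZSpan.fundamentalDomain (bb d) ⊆ Set.Icc (0 : Fin d → ℝ) 1 := by
  intro x h
  rw [ZSpan.fundamentalDomain_pi_basisFun] at h
  constructor <;> rw [Pi.le_def] <;> intro i <;>
    [exact (h i trivial).1; exact le_of_lt (h i trivial).2]

lemma D_meas : MeasurableSet (ZSpan.fundamentalDomain (bb d)) := by
  rw [ZSpan.fundamentalDomain_pi_basisFun]
  exact MeasurableSet.pi Set.countable_univ fun _ _ => measurableSet_Ico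

lemma D_vol : volume (ZSpan.fundamentalDomain (bb d)) = 1 := by
  rw [ZSpan.fundamentalDomain_pi_basisFun, volume_pi_pi]
  simp [Real.volume_Ico]

lemma Icc_vol : volume (Set.Icc (0 : Fin d → ℝ) 1) = 1 := by
  have : Set.Icc (0 : Fin d → ℝ) 1 = Set.pi Set.univ fun _ => Set.Icc (0 : ℝ) 1 := by
    ext x; simp [Set.mem_Icc, Pi.le_def, forall_and]
  rw [this, volume_pi_pi]
  simp [Real.volume_Icc]

lemma D_ae : ZSpan.fundamentalDomain (bb d) =ᵐ[volume] Set.Icc (0 : Fin d → ℝ) 1 := by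
  refine ae_eq_of_subset_of_measure_ge (D_subset d) ?_ ((D_meas d).nullMeasurableSet) ?_
  · rw [D_vol, Icc_vol]
  · rw [Icc_vol]; exact ENNReal.one_ne_top

lemma norm_le_one {u : Fin d → ℝ} (h : u ∈ Set.Icc (0 : Fin d → ℝ) 1) : ‖u‖ ≤ 1 := by
  rw [pi_norm_le_iff_of_nonneg zero_le_one]
  intro i
  have h0 : (0 : ℝ) ≤ u i := Pi.le_def.mp h.1 i
  have h1 : u i ≤ 1 := Pi.le_def.mp h.2 i
  rw [Real.norm_eq_abs, abs_le]; exact ⟨by linarith, h1⟩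

lemma norm_sub_le_one {u v : Fin d → ℝ} (hu : u ∈ Set.Icc (0 : Fin d → ℝ) 1)
    (hv : v ∈ Set.Icc (0 : Fin d → ℝ) 1) : ‖u - v‖ ≤ 1 := by
  rw [pi_norm_le_iff_of_nonneg zero_le_one]
  intro i
  have hu0 : (0 : ℝ) ≤ u i := Pi.le_def.mp hu.1 i
  have hu1 : u i ≤ 1 := Pi.le_def.mp hu.2 i
  have hv0 : (0 : ℝ) ≤ v i := Pi.le_def.mp hv.1 i
  have hv1 : v i ≤ 1 := Pi.le_def.mp hv.2 i
  rw [Pi.sub_apply, Real.norm_eq_abs, abs_le]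
  constructor <;> linarith

lemma dist_smul (ε : ℝ) (x y : Fin d → ℝ) : dist (ε • x) (ε • y) = |ε| * ‖x - y‖ := by
  rw [dist_eq_norm, ← smul_sub, norm_smul, Real.norm_eq_abs]

end OscAux

open OscAux

set_option maxHeartbeats 3000000 in
/-- Shift-uniform mean-value lemma.  If `φ(x, y)` is continuous, compactly
supported in `x` and `ℤ^d`-periodic in `y`, then
`∫ φ(x, x/ε + s) dx → ∫∫_{[0,1]^d} φ(x, y) dy dx` as `ε → 0⁺`, uniformly with respect to
arbitrary shifts `s ∈ ℝ^d` of the fast variable. -/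
theorem oscillating_mean_value_uniform_shift
    (d : ℕ) (hd : 1 ≤ d) (φ : (Fin d → ℝ) → (Fin d → ℝ) → ℝ)
    (hcont : Continuous fun p : (Fin d → ℝ) × (Fin d → ℝ) => φ p.1 p.2)
    (hsupp : ∃ K : Set (Fin d → ℝ), IsCompact K ∧ ∀ x ∉ K, ∀ y, φ x y = 0)
    (hper : ∀ (x y : Fin d → ℝ) (k : Fin d → ℤ), φ x (y + fun i => (k i : ℝ)) = φ x y) :
    ∀ δ : ℝ, 0 < δ → ∃ ε₀ : ℝ, 0 < ε₀ ∧ ∀ ε : ℝ, 0 < ε → ε < ε₀ → ∀ s : Fin d → ℝ,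
      |(∫ x : Fin d → ℝ, φ x (ε⁻¹ • x + s)) -
          ∫ x : Fin d → ℝ, ∫ y in Set.Icc (0 : Fin d → ℝ) 1, φ x y| < δ := by
  intro δ hδ
  obtain ⟨K, hK, hK0⟩ := hsupp
  set D : Set (Fin d → ℝ) := ZSpan.fundamentalDomain (bb d) with hD_def
  have hDsub : D ⊆ Set.Icc (0 : Fin d → ℝ) 1 := D_subset d
  have hDmeas : MeasurableSet D := D_meas d
  have hDvol : volume D = 1 := D_vol d
  have hFD : IsAddFundamentalDomain (LL d) D volume := ZSpan.isAddFundamentalDomain (bb d) volume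
  -- continuity of slices
  have hcx : ∀ x : Fin d → ℝ, Continuous (φ x) := fun x => hcont.comp (Continuous.prodMk_right x)
  -- periodicity for lattice elements
  have hperL : ∀ (x y : Fin d → ℝ) (γ : LL d), φ x (y + (γ : Fin d → ℝ)) = φ x y := by
    intro x y γ
    obtain ⟨k, hk⟩ := intvec d γ.2
    rw [hk]; exact hper x y k
  -- uniform continuity in x, uniformly in y
  have hUC : ∀ η : ℝ, 0 < η → ∃ ρ : ℝ, 0 < ρ ∧ ρ ≤ 1 ∧
      ∀ x x' y, dist x x' ≤ ρ → |φ x y - φ x' y| ≤ η := by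
    intro η hη
    set K₁ := Metric.cthickening 1 K with hK₁_def
    have hK₁ : IsCompact K₁ := hK.cthickening
    have hC : IsCompact (K₁ ×ˢ Set.Icc (0 : Fin d → ℝ) 1) := hK₁.prod isCompact_Icc
    have hucon := Metric.uniformContinuousOn_iff_le.mp
      (hC.uniformContinuousOn_of_continuous hcont.continuousOn) η hη
    obtain ⟨ρ, hρ0, hρ⟩ := hucon
    refine ⟨min ρ 1, by positivity, min_le_right _ _, ?_⟩
    intro x x' y hxx
    -- reduce y modulo the lattice
    have hyred : ∀ x'' : Fin d → ℝ, φ x'' y = φ x'' (ZSpan.fract (bb d) y) := by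
      intro x''
      have h1 : y = ZSpan.fract (bb d) y + ((ZSpan.floor (bb d) y : Fin d → ℝ)) := by
        rw [ZSpan.fract]; abel
      calc φ x'' y = φ x'' (ZSpan.fract (bb d) y + ((ZSpan.floor (bb d) y : Fin d → ℝ))) := by
            rw [← h1]
        _ = φ x'' (ZSpan.fract (bb d) y) := hperL x'' _ _
    have hy' : ZSpan.fract (bb d) y ∈ Set.Icc (0 : Fin d → ℝ) 1 :=
      hDsub (ZSpan.fract_mem_fundamentalDomain (bb d) y)
    by_cases hx : x ∈ K ∨ x' ∈ K
    · have hxK₁ : x ∈ K₁ ∧ x' ∈ K₁ := by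
        rcases hx with h | h
        · exact ⟨Metric.self_subset_cthickening K h,
            Metric.mem_cthickening_of_dist_le x' x 1 K h (by rw [dist_comm]; exact le_trans hxx (min_le_right _ _))⟩
        · exact ⟨Metric.mem_cthickening_of_dist_le x x' 1 K h
              (le_trans hxx (min_le_right _ _)),
            Metric.self_subset_cthickening K h⟩
      have hd2 := hρ (x, ZSpan.fract (bb d) y) ⟨hxK₁.1, hy'⟩
        (x', ZSpan.fract (bb d) y) ⟨hxK₁.2, hy'⟩
        (by rw [Prod.dist_eq]; simp only [dist_self]
            exact max_le (le_trans hxx (min_le_left _ _)) hρ0.le)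
      rw [Real.dist_eq] at hd2
      rw [hyred x, hyred x']
      exact hd2
    · push_neg at hx
      rw [hK0 x hx.1 y, hK0 x' hx.2 y]
      simpa using hη.le
  -- the averaged function
  set F : (Fin d → ℝ) → ℝ := fun x => ∫ y in Set.Icc (0 : Fin d → ℝ) 1, φ x y with hF_def
  have hφInt : ∀ x, IntegrableOn (φ x) (Set.Icc (0 : Fin d → ℝ) 1) volume := fun x =>
    (hcx x).continuousOn.integrableOn_compact isCompact_Icc
  have hIccvol : volume (Set.Icc (0 : Fin d → ℝ) 1) = 1 := Icc_vol d
  have hFbound : ∀ η ρ : ℝ, (∀ x x' y, dist x x' ≤ ρ → |φ x y - φ x' y| ≤ η) →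
      ∀ x x', dist x x' ≤ ρ → |F x - F x'| ≤ η := by
    intro η ρ hb x x' hxx
    have hsub : F x - F x' = ∫ y in Set.Icc (0 : Fin d → ℝ) 1, (φ x y - φ x' y) :=
      (integral_sub (hφInt x) (hφInt x')).symm
    rw [hsub, ← Real.norm_eq_abs]
    calc ‖∫ y in Set.Icc (0 : Fin d → ℝ) 1, (φ x y - φ x' y)‖
        ≤ η * (volume (Set.Icc (0 : Fin d → ℝ) 1)).toReal := by
          refine norm_setIntegral_le_of_norm_le_const_ae' (by rw [hIccvol]; exact ENNReal.one_lt_top)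
            (Filter.Eventually.of_forall fun y _ => ?_)
          rw [Real.norm_eq_abs]
          exact hb x x' y hxx
      _ = η := by rw [hIccvol]; simp
  have hFcont : Continuous F := by
    rw [Metric.continuous_iff]
    intro x ε hε
    obtain ⟨ρ, hρ0, _, hρ⟩ := hUC (ε / 2) (by positivity)
    refine ⟨ρ, hρ0, fun x' hx' => ?_⟩
    have h1 : |F x' - F x| ≤ ε / 2 := hFbound (ε / 2) ρ hρ x' x hx'.le
    rw [Real.dist_eq]
    linarith
  have hF0 : ∀ x ∉ K, F x = 0 := by
    intro x hx
    rw [hF_def]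
    simp only [hK0 x hx]
    exact integral_zero _ _
  -- choice of constants
  set CK : ℝ := (volume (Metric.cthickening 1 K)).toReal with hCK_def
  have hCK0 : 0 ≤ CK := ENNReal.toReal_nonneg
  set η : ℝ := δ / (2 * (CK + 1)) with hη_def
  have hη : 0 < η := by positivity
  obtain ⟨ρ, hρ0, hρ1, hρ⟩ := hUC η hη
  refine ⟨ρ, hρ0, ?_⟩
  intro ε hε hερ s
  have hε1 : ε ≤ 1 := le_trans hερ.le hρ1
  set n : ℕ := Module.finrank ℝ (Fin d → ℝ) with hn_def
  have hεn : (0 : ℝ) < ε ^ n := pow_pos hε n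
  -- rescaled functions
  set Gf : (Fin d → ℝ) → ℝ := fun z => φ (ε • z) (z + s) with hGf_def
  set Fε : (Fin d → ℝ) → ℝ := fun z => F (ε • z) with hFε_def
  have hGfc : Continuous Gf :=
    hcont.comp ((continuous_const_smul ε).prodMk (continuous_id.add continuous_const))
  have hKi : IsCompact (ε⁻¹ • K) := hK.smul ε⁻¹
  have hGfsupp : HasCompactSupport Gf := HasCompactSupport.intro hKi (by
    intro z hz
    have hzK : ε • z ∉ K := fun h => hz ((Set.mem_inv_smul_set_iff₀ hε.ne' K z).mpr h)
    exact hK0 _ hzK _)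
  have hGi : Integrable Gf := hGfc.integrable_of_hasCompactSupport hGfsupp
  have hFεc : Continuous Fε := hFcont.comp (continuous_const_smul ε)
  have hFεsupp : HasCompactSupport Fε := HasCompactSupport.intro hKi (by
    intro z hz
    exact hF0 _ (fun h => hz ((Set.mem_inv_smul_set_iff₀ hε.ne' K z).mpr h)))
  have hFi : Integrable Fε := hFεc.integrable_of_hasCompactSupport hFεsupp
  -- scaling identities
  have hA : (∫ x : Fin d → ℝ, φ x (ε⁻¹ • x + s)) = ε ^ n • ∫ z, Gf z := by
    have h1 : ∀ x : Fin d → ℝ, φ x (ε⁻¹ • x + s) = Gf (ε⁻¹ • x) := by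
      intro x
      rw [hGf_def]
      simp only
      rw [smul_inv_smul₀ hε.ne']
    simp_rw [h1]
    exact Measure.integral_comp_inv_smul_of_nonneg volume Gf hε.le
  have hB : (∫ x : Fin d → ℝ, F x) = ε ^ n • ∫ z, Fε z := by
    have h2 := Measure.integral_comp_smul volume F ε
    rw [abs_of_pos (by positivity : (0:ℝ) < (ε ^ Module.finrank ℝ (Fin d → ℝ))⁻¹)] at h2
    calc (∫ x : Fin d → ℝ, F x) = ε ^ n • ((ε ^ n)⁻¹ • ∫ x : Fin d → ℝ, F x) := by
          rw [smul_smul, mul_inv_cancel₀ hεn.ne', one_smul]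
      _ = ε ^ n • ∫ z, Fε z := by rw [← h2]
  set g : (Fin d → ℝ) → ℝ := fun z => Gf z - Fε z with hg_def
  have hgi : Integrable g := hGi.sub hFi
  -- dominating indicator function
  set χ : (Fin d → ℝ) → ℝ := (Metric.cthickening 1 K).indicator (fun _ => 2 * η) with hχ_def
  set ψ : (Fin d → ℝ) → ℝ := fun z => χ (ε • z) with hψ_def
  have hχmeas : MeasurableSet (Metric.cthickening 1 K) :=
    (Metric.isClosed_cthickening).measurableSet
  have hψ_eq : ψ = (ε⁻¹ • Metric.cthickening 1 K).indicator (fun _ => 2 * η) := by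
    funext z
    rw [hψ_def]
    simp only
    by_cases hz : ε • z ∈ Metric.cthickening 1 K
    · rw [hχ_def, Set.indicator_of_mem hz,
        Set.indicator_of_mem ((Set.mem_inv_smul_set_iff₀ hε.ne' _ z).mpr hz)]
    · rw [hχ_def, Set.indicator_of_notMem hz,
        Set.indicator_of_notMem (fun h => hz ((Set.mem_inv_smul_set_iff₀ hε.ne' _ z).mp h))]
  have hψi : Integrable ψ := by
    rw [hψ_eq]
    refine (integrable_indicator_iff ((hK.cthickening.smul ε⁻¹).isClosed.measurableSet)).2 ?_
    exact integrableOn_const ((hK.cthickening.smul ε⁻¹).measure_lt_top).ne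
  -- decomposition of integrals as sums over lattice translates
  have hsum : ∀ f : (Fin d → ℝ) → ℝ, Integrable f volume →
      HasSum (fun γ : LL d => ∫ u in D, f ((γ : Fin d → ℝ) + u)) (∫ z, f z) := by
    intro f hf
    have h1 : (Measure.sum fun γ : LL d => volume.restrict (γ +ᵥ D)) = volume :=
      hFD.sum_restrict_of_ac Measure.AbsolutelyContinuous.rfl
    have h2 : HasSum (fun γ : LL d => ∫ z in (γ +ᵥ D), f z) (∫ z, f z) := by
      have h := hasSum_integral_measure (μ := fun γ : LL d => volume.restrict (γ +ᵥ D)) (f := f)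
        (by rwa [h1])
      rwa [h1] at h
    have h3 : ∀ γ : LL d, (∫ z in (γ +ᵥ D), f z) = ∫ u in D, f ((γ : Fin d → ℝ) + u) := by
      intro γ
      have him : ((γ : Fin d → ℝ) + ·) '' D = γ +ᵥ D := rfl
      rw [← him]
      exact (measurePreserving_add_left volume (γ : Fin d → ℝ)).setIntegral_image_emb
        (measurableEmbedding_addLeft _) f D
    simp_rw [h3] at h2
    exact h2
  have hts := hsum g hgi
  have hcs := hsum ψ hψi
  have intOnD : ∀ {h : (Fin d → ℝ) → ℝ}, Continuous h → IntegrableOn h D volume := fun hc =>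
    (hc.continuousOn.integrableOn_compact isCompact_Icc).mono_set hDsub
  -- key per-cell estimate
  have hkey : ∀ γ : LL d, |∫ u in D, g ((γ : Fin d → ℝ) + u)| ≤
      ∫ u in D, ψ ((γ : Fin d → ℝ) + u) := by
    intro γ
    set w : Fin d → ℝ := ε • (γ : Fin d → ℝ) with hw_def
    set p : (Fin d → ℝ) → ℝ := fun u => φ (ε • ((γ : Fin d → ℝ) + u)) (u + s) with hp_def
    set q : (Fin d → ℝ) → ℝ := fun u => F (ε • ((γ : Fin d → ℝ) + u)) with hq_def
    set r : (Fin d → ℝ) → ℝ := fun u => φ w (u + s) with hr_def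
    have hg_eq : ∀ u : Fin d → ℝ, g ((γ : Fin d → ℝ) + u) = p u - q u := by
      intro u
      rw [hg_def, hGf_def, hFε_def, hp_def, hq_def]
      simp only
      congr 1
      have harg : ((γ : Fin d → ℝ) + u) + s = (u + s) + (γ : Fin d → ℝ) := by ring
      rw [harg, hperL _ _ γ]
    have hc1 : Continuous p := by
      rw [hp_def]
      exact hcont.comp (((continuous_const.add continuous_id).const_smul ε).prodMk
        (continuous_id.add continuous_const))
    have hc2 : Continuous q := by
      rw [hq_def]
      exact hFcont.comp ((continuous_const.add continuous_id).const_smul ε)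
    have hc3 : Continuous r := by
      rw [hr_def]
      exact (hcx w).comp (continuous_id.add continuous_const)
    have i1 : IntegrableOn p D volume := intOnD hc1
    have i2 : IntegrableOn q D volume := intOnD hc2
    have i3 : IntegrableOn r D volume := intOnD hc3
    have i4 : IntegrableOn (fun _ => F w) D volume :=
      integrableOn_const (by rw [hDvol]; exact ENNReal.one_ne_top)
    have e0 : (∫ u in D, g ((γ : Fin d → ℝ) + u)) = (∫ u in D, p u) - ∫ u in D, q u := by
      rw [setIntegral_congr_fun hDmeas (fun u _ => hg_eq u)]
      exact integral_sub i1 i2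
    have e2 : (∫ u in D, (q u - F w)) = (∫ u in D, q u) - F w := by
      rw [integral_sub i2 i4, setIntegral_const, measureReal_def, hDvol]
      norm_num
    -- the mean-value identity for the shifted cell
    have hM : (∫ u in D, r u) = F w := by
      have e1' : (∫ u in D, r u) = ∫ y in ((fun u : Fin d → ℝ => u + s) '' D), φ w y := by
        exact ((measurePreserving_add_right volume s).setIntegral_image_emb
          (measurableEmbedding_addRight s) (φ w) D).symm
      have e2' : ((fun u : Fin d → ℝ => u + s) '' D) = s +ᵥ D := by
        have hfun : (fun u : Fin d → ℝ => u + s) = (fun u => s + u) := funext fun u => add_comm u s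
        rw [hfun]
        rfl
      have hFD2 : IsAddFundamentalDomain (LL d) (s +ᵥ D) volume := hFD.vadd_of_comm s
      have e3' : (∫ y in s +ᵥ D, φ w y) = ∫ y in D, φ w y :=
        hFD2.setIntegral_eq hFD (fun γ' y => by
          show φ w ((γ' : Fin d → ℝ) + y) = φ w y
          rw [add_comm]
          exact hperL w y γ')
      have e4' : (∫ y in D, φ w y) = ∫ y in Set.Icc (0 : Fin d → ℝ) 1, φ w y :=
        setIntegral_congr_set (D_ae d)
      rw [e1', e2', e3', e4', hF_def]
    have htγ : (∫ u in D, g ((γ : Fin d → ℝ) + u)) =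
        (∫ u in D, (p u - r u)) - (∫ u in D, (q u - F w)) := by
      rw [e0, integral_sub i1 i3, e2, hM]
      ring
    by_cases hcase : ∃ u ∈ Set.Icc (0 : Fin d → ℝ) 1, ε • ((γ : Fin d → ℝ) + u) ∈ K
    · obtain ⟨u₀, hu₀, hu₀K⟩ := hcase
      have hcube : ∀ u ∈ Set.Icc (0 : Fin d → ℝ) 1,
          ε • ((γ : Fin d → ℝ) + u) ∈ Metric.cthickening 1 K := by
        intro u hu
        refine Metric.mem_cthickening_of_dist_le _ _ 1 K hu₀K ?_
        have hdd : dist (ε • ((γ : Fin d → ℝ) + u)) (ε • ((γ : Fin d → ℝ) + u₀)) =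
            |ε| * ‖u - u₀‖ := by
          rw [OscAux.dist_smul]
          congr 2
          abel
        rw [hdd]
        calc |ε| * ‖u - u₀‖ ≤ 1 * 1 :=
              mul_le_mul (by rw [abs_of_pos hε]; exact hε1) (norm_sub_le_one d hu hu₀)
                (norm_nonneg _) zero_le_one
          _ = 1 := one_mul 1
      have hψval : (∫ u in D, ψ ((γ : Fin d → ℝ) + u)) = 2 * η := by
        have hval : ∀ u ∈ D, ψ ((γ : Fin d → ℝ) + u) = 2 * η := by
          intro u hu
          rw [hψ_def]
          simp only
          rw [hχ_def]
          exact Set.indicator_of_mem (hcube u (hDsub hu)) _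
        rw [setIntegral_congr_fun hDmeas hval, setIntegral_const, measureReal_def, hDvol]
        norm_num
      have hdistw : ∀ u ∈ D, dist (ε • ((γ : Fin d → ℝ) + u)) w ≤ ρ := by
        intro u hu
        have hdd : dist (ε • ((γ : Fin d → ℝ) + u)) w = |ε| * ‖u‖ := by
          rw [hw_def, OscAux.dist_smul]
          congr 2
          abel
        rw [hdd, abs_of_pos hε]
        calc ε * ‖u‖ ≤ ε * 1 := by
              have := norm_le_one d (hDsub hu)
              nlinarith
          _ ≤ ρ := by rw [mul_one]; exact hερ.le
      have hI1 : |∫ u in D, (p u - r u)| ≤ η := by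
        rw [← Real.norm_eq_abs]
        calc ‖∫ u in D, (p u - r u)‖ ≤ η * (volume D).toReal := by
              refine norm_setIntegral_le_of_norm_le_const_ae'
                (by rw [hDvol]; exact ENNReal.one_lt_top)
                (Filter.Eventually.of_forall fun u hu => ?_)
              rw [Real.norm_eq_abs, hp_def, hr_def]
              exact hρ _ _ _ (hdistw u hu)
          _ = η := by rw [hDvol]; simp
      have hI3 : |∫ u in D, (q u - F w)| ≤ η := by
        rw [← Real.norm_eq_abs]
        calc ‖∫ u in D, (q u - F w)‖ ≤ η * (volume D).toReal := by
              refine norm_setIntegral_le_of_norm_le_const_ae'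
                (by rw [hDvol]; exact ENNReal.one_lt_top)
                (Filter.Eventually.of_forall fun u hu => ?_)
              rw [Real.norm_eq_abs, hq_def]
              exact hFbound η ρ hρ _ _ (hdistw u hu)
          _ = η := by rw [hDvol]; simp
      rw [hψval, htγ]
      calc |(∫ u in D, (p u - r u)) - ∫ u in D, (q u - F w)| ≤
            |∫ u in D, (p u - r u)| + |∫ u in D, (q u - F w)| := abs_sub _ _
        _ ≤ η + η := add_le_add hI1 hI3
        _ = 2 * η := by ring
    · push_neg at hcase
      have ht0 : ∀ u ∈ D, g ((γ : Fin d → ℝ) + u) = 0 := by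
        intro u hu
        rw [hg_eq u, hp_def, hq_def]
        simp only
        rw [hK0 _ (hcase u (hDsub hu)), hF0 _ (hcase u (hDsub hu))]
        ring
      rw [setIntegral_congr_fun hDmeas ht0]
      simp only [integral_zero, abs_zero]
      refine setIntegral_nonneg hDmeas fun u hu => ?_
      rw [hψ_def]
      exact Set.indicator_nonneg (fun _ _ => by positivity) _
  -- assemble the estimate
  have habs : |∫ z, g z| ≤ ∫ z, ψ z := by
    have hsummb : Summable fun γ : LL d => |∫ u in D, g ((γ : Fin d → ℝ) + u)| :=
      hts.summable.abs
    calc |∫ z, g z| = |∑' γ : LL d, ∫ u in D, g ((γ : Fin d → ℝ) + u)| := by rw [hts.tsum_eq]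
      _ ≤ ∑' γ : LL d, |∫ u in D, g ((γ : Fin d → ℝ) + u)| := by
          have hnn := norm_tsum_le_tsum_norm
            (f := fun γ : LL d => ∫ u in D, g ((γ : Fin d → ℝ) + u))
            (by simpa [Real.norm_eq_abs] using hsummb)
          simpa [Real.norm_eq_abs] using hnn
      _ ≤ ∑' γ : LL d, ∫ u in D, ψ ((γ : Fin d → ℝ) + u) :=
          Summable.tsum_le_tsum hkey hsummb hcs.summable
      _ = ∫ z, ψ z := hcs.tsum_eq
  have hψint : (∫ z, ψ z) = (ε ^ n)⁻¹ * (2 * η * CK) := by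
    have h1 : (∫ z, ψ z) = |(ε ^ n)⁻¹| • ∫ z, χ z := Measure.integral_comp_smul volume χ ε
    rw [h1, hχ_def, integral_indicator_const _ hχmeas, abs_of_pos (by positivity), hCK_def]
    simp only [smul_eq_mul, measureReal_def]
    ring
  -- final computation
  rw [hA, hB]
  have hgfin : (∫ z, Gf z) - (∫ z, Fε z) = ∫ z, g z := by
    rw [hg_def]
    exact (integral_sub hGi hFi).symm
  have hfinal : |ε ^ n • (∫ z, Gf z) - ε ^ n • ∫ z, Fε z| ≤ 2 * η * CK := by
    calc |ε ^ n • (∫ z, Gf z) - ε ^ n • ∫ z, Fε z| = ε ^ n * |∫ z, g z| := by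
          rw [smul_eq_mul, smul_eq_mul, ← mul_sub, abs_mul, abs_of_pos hεn, hgfin]
      _ ≤ ε ^ n * ((ε ^ n)⁻¹ * (2 * η * CK)) := by
          refine mul_le_mul_of_nonneg_left ?_ hεn.le
          rw [← hψint]
          exact habs
      _ = 2 * η * CK := by field_simp
  refine lt_of_le_of_lt hfinal ?_
  have hid : 2 * η * (CK + 1) = δ := by
    rw [hη_def]
    field_simp
  nlinarith [hη, hCK0]
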